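/- Let a ≥ 1 and let C_3(a,a,a) be the graph obtained from the triangle C_3 by attaching a pendant vertices to each of its three vertices. Then the eigenvalues −(√(1+4a)+1)/2 and (√(1+4a)−1)/2 of the adjacency matrix of C_3(a,a,a) each have multiplicity 2, and 1−√(1+a) and 1+√(1+a) are also eigenvalues, each with multiplicity 1. -/

import Mathlib

open Module

attribute [local instance] Classical.propDecidable

noncomputable def adjMat {V : Type*} [Fintype V] (G : SimpleGraph V) : Matrix V V ℝ :=
  Matrix.of fun u v => if G.Adj u v then 1 else 0

noncomputable def eigMult {V : Type*} [Fintype V] (G : SimpleGraph V) (μ : ℝ) : ℕ :=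
  Module.finrank ℝ (Module.End.eigenspace (adjMat G).mulVecLin μ)

def HasEig {V : Type*} [Fintype V] (G : SimpleGraph V) (μ : ℝ) : Prop :=
  Module.End.HasEigenvalue (adjMat G).mulVecLin μ

def IsMatchingSet {V : Type*} (G : SimpleGraph V) (M : Finset (Sym2 V)) : Prop :=
  (∀ e ∈ M, e ∈ G.edgeSet) ∧
  ∀ e ∈ M, ∀ f ∈ M, e ≠ f → ∀ v, v ∈ e → v ∉ f

def IsInducedMatchingSet {V : Type*} (G : SimpleGraph V) (M : Finset (Sym2 V)) : Prop :=
  IsMatchingSet G M ∧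
  ∀ e ∈ M, ∀ f ∈ M, e ≠ f → ∀ u v, u ∈ e → v ∈ f → ¬ G.Adj u v

noncomputable def matchNum {V : Type*} [Fintype V] (G : SimpleGraph V) : ℕ :=
  sSup {k | ∃ M, IsMatchingSet G M ∧ M.card = k}

noncomputable def indMatchNum {V : Type*} [Fintype V] (G : SimpleGraph V) : ℕ :=
  sSup {k | ∃ M, IsInducedMatchingSet G M ∧ M.card = k}

noncomputable def cyclomatic {V : Type*} [Fintype V] (G : SimpleGraph V) : ℕ :=
  G.edgeSet.ncard + 1 - Fintype.card V

def delV {V : Type*} (G : SimpleGraph V) (v : V) : SimpleGraph {u : V // u ≠ v} :=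
  G.induce {u : V | u ≠ v}

def starGraph (n : ℕ) : SimpleGraph (Fin (n + 1)) :=
  SimpleGraph.fromRel (fun u _ => u = 0)

def triStar (a : ℕ) : SimpleGraph (Fin 3 ⊕ Fin 3 × Fin a) :=
  SimpleGraph.fromRel (fun x y =>
    (∃ i j, x = Sum.inl i ∧ y = Sum.inl j) ∨
    (∃ i k, x = Sum.inl i ∧ y = Sum.inr (i, k)))

namespace TriStarAux
variable {a : ℕ}

lemma adj_ll {i j : Fin 3} : (triStar a).Adj (Sum.inl i) (Sum.inl j) ↔ i ≠ j := by
  simp [triStar, SimpleGraph.fromRel_adj]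

lemma adj_lr {i j : Fin 3} {k : Fin a} : (triStar a).Adj (Sum.inl i) (Sum.inr (j,k)) ↔ i = j := by
  simp [triStar, SimpleGraph.fromRel_adj]; aesop

lemma adj_rl {i j : Fin 3} {k : Fin a} : (triStar a).Adj (Sum.inr (j,k)) (Sum.inl i) ↔ i = j := by
  rw [SimpleGraph.adj_comm]; exact adj_lr

lemma adj_rr {p q : Fin 3 × Fin a} : ¬ (triStar a).Adj (Sum.inr p) (Sum.inr q) := by
  simp [triStar, SimpleGraph.fromRel_adj]

lemma mv_inl (x : (Fin 3 ⊕ Fin 3 × Fin a) → ℝ) (i : Fin 3) :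
    (adjMat (triStar a)).mulVec x (Sum.inl i)
      = ((∑ j : Fin 3, x (Sum.inl j)) - x (Sum.inl i)) + ∑ k : Fin a, x (Sum.inr (i, k)) := by
  rw [Matrix.mulVec, dotProduct, Fintype.sum_sum_type]
  have h1 : ∑ j : Fin 3, adjMat (triStar a) (Sum.inl i) (Sum.inl j) * x (Sum.inl j)
      = (∑ j : Fin 3, x (Sum.inl j)) - x (Sum.inl i) := by
    simp only [adjMat, Matrix.of_apply, adj_ll]
    fin_cases i <;> simp [Fin.sum_univ_three, Fin.ext_iff] <;> ring
  have h2 : ∑ p : Fin 3 × Fin a, adjMat (triStar a) (Sum.inl i) (Sum.inr p) * x (Sum.inr p)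
      = ∑ k : Fin a, x (Sum.inr (i, k)) := by
    rw [Fintype.sum_prod_type]
    have : ∀ j : Fin 3, ∑ k : Fin a, adjMat (triStar a) (Sum.inl i) (Sum.inr (j,k)) * x (Sum.inr (j,k))
        = if i = j then ∑ k : Fin a, x (Sum.inr (j, k)) else 0 := by
      intro j; by_cases h : i = j <;> simp [adjMat, adj_lr, h]
    simp_rw [this]; simp
  rw [h1, h2]

lemma mv_inr (x : (Fin 3 ⊕ Fin 3 × Fin a) → ℝ) (i : Fin 3) (k : Fin a) :
    (adjMat (triStar a)).mulVec x (Sum.inr (i,k)) = x (Sum.inl i) := by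
  rw [Matrix.mulVec, dotProduct, Fintype.sum_sum_type]
  have h1 : ∑ j : Fin 3, adjMat (triStar a) (Sum.inr (i,k)) (Sum.inl j) * x (Sum.inl j)
      = x (Sum.inl i) := by
    simp only [adjMat, Matrix.of_apply, adj_rl]
    fin_cases i <;> simp [Fin.sum_univ_three]
  have h2 : ∑ p : Fin 3 × Fin a, adjMat (triStar a) (Sum.inr (i,k)) (Sum.inr p) * x (Sum.inr p) = 0 := by
    simp [adjMat, adj_rr]
  rw [h1, h2, add_zero]

lemma mem_eig (μ : ℝ) (x : (Fin 3 ⊕ Fin 3 × Fin a) → ℝ) :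
    x ∈ Module.End.eigenspace (adjMat (triStar a)).mulVecLin μ ↔
      (∀ i : Fin 3, ((∑ j : Fin 3, x (Sum.inl j)) - x (Sum.inl i)) + (∑ k : Fin a, x (Sum.inr (i, k)))
          = μ * x (Sum.inl i)) ∧
      (∀ (i : Fin 3) (k : Fin a), x (Sum.inl i) = μ * x (Sum.inr (i,k))) := by
  rw [Module.End.mem_eigenspace_iff]
  constructor
  · intro h
    constructor
    · intro i
      have := congrFun h (Sum.inl i)
      rwa [Matrix.mulVecLin_apply, mv_inl] at this
    · intro i k
      have := congrFun h (Sum.inr (i,k))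
      rw [Matrix.mulVecLin_apply, mv_inr] at this
      simpa using this
  · rintro ⟨h1, h2⟩
    funext v
    rcases v with i | ⟨i, k⟩
    · rw [Matrix.mulVecLin_apply, mv_inl]; simpa using h1 i
    · rw [Matrix.mulVecLin_apply, mv_inr]; simpa using h2 i k

section Mult2

variable (μ : ℝ)

/-- eigenvectors for μ with μ² + μ = a -/
lemma eigMult_two (hμ : μ^2 + μ = a) (hμ0 : μ ≠ 0) : eigMult (triStar a) μ = 2 := by
  set E := Module.End.eigenspace (adjMat (triStar a)).mulVecLin μ with hE
  have key : ∀ x ∈ E, (∑ j : Fin 3, x (Sum.inl j)) = 0 ∧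
      (∀ i k, x (Sum.inr (i,k)) = x (Sum.inl i) / μ) := by
    intro x hx
    rw [mem_eig] at hx
    obtain ⟨h1, h2⟩ := hx
    have hp : ∀ i k, x (Sum.inr (i,k)) = x (Sum.inl i) / μ := by
      intro i k; rw [eq_div_iff hμ0, mul_comm]; exact (h2 i k).symm
    have hsum : ∀ i : Fin 3, ((∑ j : Fin 3, x (Sum.inl j)) - x (Sum.inl i)) + a * (x (Sum.inl i) / μ)
        = μ * x (Sum.inl i) := by
      intro i
      have := h1 i
      rwa [Finset.sum_congr rfl (fun k _ => hp i k), Finset.sum_const, Finset.card_univ,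
        Fintype.card_fin, nsmul_eq_mul] at this
    refine ⟨?_, hp⟩
    have h0 := hsum 0
    have : μ * ((∑ j : Fin 3, x (Sum.inl j)) - x (Sum.inl 0)) + a * x (Sum.inl 0)
        = μ^2 * x (Sum.inl 0) := by
      field_simp at h0 ⊢
      nlinarith [h0]
    rw [← hμ] at this
    have : μ * (∑ j : Fin 3, x (Sum.inl j)) = 0 := by ring_nf at this ⊢; linarith
    rcases mul_eq_zero.mp this with h | h
    · exact absurd h hμ0
    · exact h
  -- linear map to ℝ²
  let φ : E →ₗ[ℝ] ℝ × ℝ :=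
    { toFun := fun x => (x.1 (Sum.inl 0), x.1 (Sum.inl 1))
      map_add' := fun x y => rfl
      map_smul' := fun c x => rfl }
  have hinj : Function.Injective φ := by
    rw [injective_iff_map_eq_zero]
    intro x hx0
    obtain ⟨hS, hp⟩ := key x.1 x.2
    have h0 : x.1 (Sum.inl 0) = 0 := congrArg Prod.fst hx0
    have h1 : x.1 (Sum.inl 1) = 0 := congrArg Prod.snd hx0
    have h2 : x.1 (Sum.inl 2) = 0 := by
      rw [Fin.sum_univ_three] at hS; linarith
    ext v
    show x.1 v = 0
    rcases v with i | ⟨i, k⟩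
    · fin_cases i <;> assumption
    · rw [hp i k]
      have : x.1 (Sum.inl i) = 0 := by fin_cases i <;> assumption
      rw [this, zero_div]
  have hsurj : Function.Surjective φ := by
    rintro ⟨b0, b1⟩
    set c : Fin 3 → ℝ := ![b0, b1, -b0 - b1] with hc
    set y : (Fin 3 ⊕ Fin 3 × Fin a) → ℝ := Sum.elim c (fun p => c p.1 / μ) with hy
    have hyE : y ∈ E := by
      rw [mem_eig]
      constructor
      · intro i
        have hS : ∑ j : Fin 3, y (Sum.inl j) = 0 := by
          simp [hy, hc, Fin.sum_univ_three]
        rw [hS]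
        have : (∑ k : Fin a, y (Sum.inr (i, k))) = a * (c i / μ) := by
          simp [hy, mul_comm]
        rw [this]
        show 0 - c i + a * (c i / μ) = μ * c i
        rw [← hμ]
        field_simp
        ring
      · intro i k
        show c i = μ * (c i / μ)
        field_simp
    exact ⟨⟨y, hyE⟩, rfl⟩
  have := LinearEquiv.finrank_eq (LinearEquiv.ofBijective φ ⟨hinj, hsurj⟩)
  rw [eigMult, ← hE, this]
  simp

lemma eigMult_one (hμ : μ^2 - 2*μ = a) (hμ0 : μ ≠ 0) : eigMult (triStar a) μ = 1 := by
  set E := Module.End.eigenspace (adjMat (triStar a)).mulVecLin μ with hE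
  have key : ∀ x ∈ E, (∀ i : Fin 3, x (Sum.inl i) = x (Sum.inl 0)) ∧
      (∀ i k, x (Sum.inr (i,k)) = x (Sum.inl i) / μ) := by
    intro x hx
    rw [mem_eig] at hx
    obtain ⟨h1, h2⟩ := hx
    have hp : ∀ i k, x (Sum.inr (i,k)) = x (Sum.inl i) / μ := by
      intro i k; rw [eq_div_iff hμ0, mul_comm]; exact (h2 i k).symm
    have hsum : ∀ i : Fin 3, ((∑ j : Fin 3, x (Sum.inl j)) - x (Sum.inl i)) + a * (x (Sum.inl i) / μ)
        = μ * x (Sum.inl i) := by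
      intro i
      have := h1 i
      rwa [Finset.sum_congr rfl (fun k _ => hp i k), Finset.sum_const, Finset.card_univ,
        Fintype.card_fin, nsmul_eq_mul] at this
    have heach : ∀ i : Fin 3, (∑ j : Fin 3, x (Sum.inl j)) = 3 * x (Sum.inl i) := by
      intro i
      have h0 := hsum i
      have hmu : μ * ((∑ j : Fin 3, x (Sum.inl j)) - x (Sum.inl i)) + a * x (Sum.inl i)
          = μ^2 * x (Sum.inl i) := by
        field_simp at h0 ⊢; nlinarith [h0]
      rw [← hμ] at hmu
      have : μ * (∑ j : Fin 3, x (Sum.inl j)) = μ * (3 * x (Sum.inl i)) := by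
        ring_nf at hmu ⊢; linarith
      exact mul_left_cancel₀ hμ0 this
    refine ⟨fun i => ?_, hp⟩
    have := (heach i).symm.trans (heach 0)
    linarith
  let φ : E →ₗ[ℝ] ℝ :=
    { toFun := fun x => x.1 (Sum.inl 0)
      map_add' := fun x y => rfl
      map_smul' := fun c x => rfl }
  have hinj : Function.Injective φ := by
    rw [injective_iff_map_eq_zero]
    intro x hx0
    obtain ⟨heq, hp⟩ := key x.1 x.2
    have h0 : x.1 (Sum.inl 0) = 0 := hx0
    ext v
    show x.1 v = 0
    rcases v with i | ⟨i, k⟩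
    · rw [heq i, h0]
    · rw [hp i k, heq i, h0, zero_div]
  have hsurj : Function.Surjective φ := by
    intro b
    set y : (Fin 3 ⊕ Fin 3 × Fin a) → ℝ := Sum.elim (fun _ => b) (fun _ => b / μ) with hy
    have hyE : y ∈ E := by
      rw [mem_eig]
      constructor
      · intro i
        have hS : ∑ j : Fin 3, y (Sum.inl j) = 3 * b := by
          simp [hy, Fin.sum_univ_three]
        rw [hS]
        have : (∑ k : Fin a, y (Sum.inr (i, k))) = a * (b / μ) := by
          simp [hy, mul_comm]
        rw [this]
        show 3 * b - b + a * (b / μ) = μ * b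
        rw [← hμ]
        field_simp
        ring
      · intro i k
        show b = μ * (b / μ)
        field_simp
    exact ⟨⟨y, hyE⟩, rfl⟩
  have := LinearEquiv.finrank_eq (LinearEquiv.ofBijective φ ⟨hinj, hsurj⟩)
  rw [eigMult, ← hE, this]
  simp

end Mult2
end TriStarAux

theorem stmt8 (a : ℕ) (ha : 1 ≤ a) :
    eigMult (triStar a) (-((Real.sqrt (1 + 4 * (a : ℝ)) + 1) / 2)) = 2 ∧
    eigMult (triStar a) ((Real.sqrt (1 + 4 * (a : ℝ)) - 1) / 2) = 2 ∧
    eigMult (triStar a) (1 - Real.sqrt (1 + (a : ℝ))) = 1 ∧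
    eigMult (triStar a) (1 + Real.sqrt (1 + (a : ℝ))) = 1 := by
  have ha1 : (1:ℝ) ≤ a := by exact_mod_cast ha
  set s := Real.sqrt (1 + 4 * (a:ℝ)) with hs
  have hs2 : s^2 = 1 + 4*(a:ℝ) := Real.sq_sqrt (by positivity)
  have hs0 : 0 ≤ s := Real.sqrt_nonneg _
  set t := Real.sqrt (1 + (a:ℝ)) with ht
  have ht2 : t^2 = 1 + (a:ℝ) := Real.sq_sqrt (by positivity)
  have ht0 : 0 ≤ t := Real.sqrt_nonneg _
  refine ⟨?_, ?_, ?_, ?_⟩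
  · exact TriStarAux.eigMult_two _ (by nlinarith) (by intro h; nlinarith)
  · exact TriStarAux.eigMult_two _ (by nlinarith) (by intro h; nlinarith [sq_nonneg s])
  · exact TriStarAux.eigMult_one _ (by nlinarith) (by intro h; nlinarith)
  · exact TriStarAux.eigMult_one _ (by nlinarith) (by intro h; nlinarith)
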